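/- Let r > 0, T > 0, a₀ ∈ ℝ, and let a₁ ∈ L²([−r,0],ℝ) satisfy a₁(ξ) ≥ 0 for a.e. ξ ∈ [−r,0]. Let u : [−r, T] → ℝ be continuous with u(ξ) ≥ 0 for all ξ ∈ [−r, 0], and suppose that for all t ∈ [0, T], u(t) = u(0) + ∫₀ᵗ ( a₀ u(s) + ∫_{−r}^0 a₁(ξ) u(s+ξ) dξ ) ds. Then u(t) ≥ 0 for all t ∈ [0, T]. -/

import Mathlib

open Set MeasureTheory intervalIntegral Filter Topology

/-- Positivity preservation for the linear delay equation
`du/dt = a₀ u(t) + ∫_{−r}^0 a₁(ξ) u(t+ξ) dξ`: if the kernel `a₁ ∈ L²([−r,0])` is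
nonnegative a.e. and the initial history is nonnegative, then the solution stays
nonnegative on `[0, T]`. -/
theorem delay_equation_positivity
    (r T a₀ : ℝ) (hr : 0 < r) (hT : 0 < T)
    (a₁ : ℝ → ℝ)
    (ha₁L2 : MemLp a₁ 2 ((volume : Measure ℝ).restrict (Icc (-r) 0)))
    (ha₁pos : ∀ᵐ ξ ∂((volume : Measure ℝ).restrict (Icc (-r) 0)), 0 ≤ a₁ ξ)
    (u : ℝ → ℝ)
    (hu_cont : ContinuousOn u (Icc (-r) T))
    (hu_init : ∀ ξ ∈ Icc (-r) (0:ℝ), 0 ≤ u ξ)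
    (h_int : ∀ t ∈ Icc (0:ℝ) T,
      IntervalIntegrable
        (fun s => a₀ * u s + ∫ ξ in Icc (-r) (0:ℝ), a₁ ξ * u (s + ξ)) volume 0 t)
    (h_inner_int : ∀ s ∈ Icc (0:ℝ) T,
      IntegrableOn (fun ξ => a₁ ξ * u (s + ξ)) (Icc (-r) 0) volume)
    (h_eq : ∀ t ∈ Icc (0:ℝ) T,
      u t = u 0 + ∫ s in (0:ℝ)..t,
        (a₀ * u s + ∫ ξ in Icc (-r) (0:ℝ), a₁ ξ * u (s + ξ))) :
    ∀ t ∈ Icc (0:ℝ) T, 0 ≤ u t := by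
  by_contra hcon
  push_neg at hcon
  obtain ⟨t₁, ht₁mem, ht₁neg⟩ := hcon
  -- The kernel is integrable
  haveI hfin : IsFiniteMeasure ((volume : Measure ℝ).restrict (Icc (-r) 0)) := by
    constructor
    rw [Measure.restrict_apply_univ, Real.volume_Icc]
    exact ENNReal.ofReal_lt_top
  have ha₁int : IntegrableOn a₁ (Icc (-r) 0) volume := by
    have := ha₁L2.mono_exponent (p := 1) (by norm_num)
    exact (memLp_one_iff_integrable.mp this)
  set A₁ : ℝ := ∫ ξ in Icc (-r) (0:ℝ), a₁ ξ with hA₁def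
  have hA₁nonneg : 0 ≤ A₁ := integral_nonneg_of_ae ha₁pos
  set K : ℝ := |a₀| + A₁ + 1 with hKdef
  have hKpos : 0 < K := by positivity
  -- the auxiliary function v
  set v : ℝ → ℝ := fun t => Real.exp (-K * t) * u t with hvdef
  have hIcc_sub : Icc (0:ℝ) T ⊆ Icc (-r) T := Icc_subset_Icc (by linarith) le_rfl
  have hv_cont : ContinuousOn v (Icc 0 T) :=
    ((Real.continuous_exp.comp (continuous_const.mul continuous_id)).continuousOn).mul
      (hu_cont.mono hIcc_sub)
  obtain ⟨t₀, ht₀mem, ht₀min⟩ :=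
    isCompact_Icc.exists_isMinOn (nonempty_Icc.mpr hT.le) hv_cont
  have ht₀min' : ∀ x ∈ Icc (0:ℝ) T, v t₀ ≤ v x := fun x hx => ht₀min hx
  have hvt₀neg : v t₀ < 0 := by
    refine lt_of_le_of_lt (ht₀min' t₁ ht₁mem) ?_
    exact mul_neg_of_pos_of_neg (Real.exp_pos _) ht₁neg
  have hut₀neg : u t₀ < 0 := by
    by_contra h
    push_neg at h
    exact absurd (mul_nonneg (Real.exp_pos _).le h) (not_le.mpr hvt₀neg)
  have ht₀pos : 0 < t₀ := by
    rcases ht₀mem.1.lt_or_eq with h | h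
    · exact h
    · exfalso
      have := hu_init 0 ⟨by linarith, le_rfl⟩
      rw [← h] at hut₀neg
      linarith
  -- the history at time t₀ dominates u t₀
  have hist : ∀ ξ ∈ Icc (-r) (0:ℝ), u t₀ ≤ u (t₀ + ξ) := by
    intro ξ hξ
    rcases lt_or_ge (t₀ + ξ) 0 with h | h
    · have h0 : 0 ≤ u (t₀ + ξ) := hu_init _ ⟨by linarith [ht₀mem.1, hξ.1], h.le⟩
      linarith
    · have hmem : t₀ + ξ ∈ Icc (0:ℝ) T := ⟨h, by linarith [ht₀mem.2, hξ.2]⟩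
      have h1 : v t₀ ≤ v (t₀ + ξ) := ht₀min' _ hmem
      have he1 : Real.exp (-K * t₀) ≤ Real.exp (-K * (t₀ + ξ)) := by
        apply Real.exp_le_exp.mpr
        nlinarith [hξ.2]
      have he2 : (0:ℝ) < Real.exp (-K * (t₀ + ξ)) := Real.exp_pos _
      have he3 : (0:ℝ) < Real.exp (-K * t₀) := Real.exp_pos _
      -- from exp(-K t₀) u t₀ ≤ exp(-K (t₀+ξ)) u (t₀+ξ) and u t₀ < 0 conclude
      simp only [hvdef] at h1
      nlinarith
  -- notation for the vector field
  set g : ℝ → ℝ := fun s => ∫ ξ in Icc (-r) (0:ℝ), a₁ ξ * u (s + ξ) with hgdef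
  set f : ℝ → ℝ := fun s => a₀ * u s + g s with hfdef
  -- a uniform bound for u
  obtain ⟨M, hM⟩ := isCompact_Icc.exists_bound_of_continuousOn hu_cont
  -- continuity of g within Icc 0 T at any point
  have hg_cont : ∀ x ∈ Icc (0:ℝ) T, ContinuousWithinAt g (Icc 0 T) x := by
    intro x hx
    have : Tendsto (fun s => ∫ ξ in Icc (-r) (0:ℝ), a₁ ξ * u (s + ξ))
        (𝓝[Icc 0 T] x) (𝓝 (∫ ξ in Icc (-r) (0:ℝ), a₁ ξ * u (x + ξ))) := by
      apply MeasureTheory.tendsto_integral_filter_of_dominated_convergence (fun ξ => |a₁ ξ| * M)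
      · filter_upwards [eventually_mem_nhdsWithin] with s hs
        exact (h_inner_int s hs).aestronglyMeasurable
      · filter_upwards [eventually_mem_nhdsWithin] with s hs
        filter_upwards [ae_restrict_mem measurableSet_Icc] with ξ hξ
        have hmem : s + ξ ∈ Icc (-r) T := ⟨by linarith [hs.1, hξ.1], by linarith [hs.2, hξ.2]⟩
        have := hM (s + ξ) hmem
        rw [Real.norm_eq_abs, abs_mul]
        exact mul_le_mul_of_nonneg_left (by simpa using this) (abs_nonneg _)
      · exact ha₁int.abs.mul_const M
      · filter_upwards [ae_restrict_mem measurableSet_Icc] with ξ hξ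
        apply Tendsto.const_mul
        have hmap : Tendsto (fun s => s + ξ) (𝓝[Icc 0 T] x) (𝓝[Icc (-r) T] (x + ξ)) := by
          rw [tendsto_nhdsWithin_iff]
          constructor
          · exact ((continuous_id.add continuous_const).tendsto x).mono_left
              nhdsWithin_le_nhds
          · filter_upwards [eventually_mem_nhdsWithin] with s hs
            exact ⟨by linarith [hs.1, hξ.1], by linarith [hs.2, hξ.2]⟩
        have hxξ : x + ξ ∈ Icc (-r) T := ⟨by linarith [hx.1, hξ.1], by linarith [hx.2, hξ.2]⟩
        exact (hu_cont _ hxξ).tendsto.comp hmap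
    exact this
  have hf_cont : ContinuousWithinAt f (Icc 0 T) t₀ :=
    ((continuous_const.continuousOn.mul (hu_cont.mono hIcc_sub)) t₀ ht₀mem).add
      (hg_cont t₀ ht₀mem)
  -- measurability of f near t₀
  have hf_meas : StronglyMeasurableAtFilter f (𝓝[Icc (0:ℝ) T] t₀) := by
    refine ⟨Icc 0 T, self_mem_nhdsWithin, ?_⟩
    have : ContinuousOn f (Icc 0 T) := by
      intro x hx
      exact ((continuous_const.continuousOn.mul (hu_cont.mono hIcc_sub)) x hx).add
        (hg_cont x hx)
    exact this.aestronglyMeasurable measurableSet_Icc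
  haveI : Fact (t₀ ∈ Icc (0:ℝ) T) := ⟨ht₀mem⟩
  -- FTC: the integral has derivative f t₀ within Icc 0 T
  have hderivF : HasDerivWithinAt (fun t => ∫ s in (0:ℝ)..t, f s) (f t₀) (Icc 0 T) t₀ :=
    integral_hasDerivWithinAt_right (h_int t₀ ht₀mem) hf_meas hf_cont
  have hderivu : HasDerivWithinAt u (f t₀) (Icc 0 T) t₀ := by
    have := (hderivF.const_add (u 0))
    exact this.congr (fun y hy => h_eq y hy) (h_eq t₀ ht₀mem)
  -- derivative of v
  have hexp : HasDerivAt (fun t : ℝ => Real.exp (-K * t)) (Real.exp (-K * t₀) * (-K)) t₀ := by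
    simpa using ((hasDerivAt_id t₀).const_mul (-K)).exp
  have hderivv : HasDerivWithinAt v
      (Real.exp (-K * t₀) * (-K) * u t₀ + Real.exp (-K * t₀) * f t₀) (Icc 0 T) t₀ :=
    (hexp.hasDerivWithinAt).mul hderivu
  -- the left derivative of v at its minimum is nonpositive
  have hv'le : Real.exp (-K * t₀) * (-K) * u t₀ + Real.exp (-K * t₀) * f t₀ ≤ 0 := by
    have hslope : Tendsto (slope v t₀) (𝓝[Icc 0 T \ {t₀}] t₀)
        (𝓝 (Real.exp (-K * t₀) * (-K) * u t₀ + Real.exp (-K * t₀) * f t₀)) :=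
      hasDerivWithinAt_iff_tendsto_slope.mp hderivv
    have hsub : Ioo (0:ℝ) t₀ ⊆ Icc 0 T \ {t₀} := by
      intro x hx
      exact ⟨⟨hx.1.le, hx.2.le.trans ht₀mem.2⟩, fun h => absurd h (ne_of_lt hx.2)⟩
    have hslope' : Tendsto (slope v t₀) (𝓝[Ioo (0:ℝ) t₀] t₀)
        (𝓝 (Real.exp (-K * t₀) * (-K) * u t₀ + Real.exp (-K * t₀) * f t₀)) :=
      hslope.mono_left (nhdsWithin_mono _ hsub)
    haveI : (𝓝[Ioo (0:ℝ) t₀] t₀).NeBot := right_nhdsWithin_Ioo_neBot ht₀pos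
    refine le_of_tendsto hslope' ?_
    filter_upwards [eventually_mem_nhdsWithin] with x hx
    rw [slope_def_field]
    have h1 : v t₀ ≤ v x := ht₀min' x ⟨hx.1.le, hx.2.le.trans ht₀mem.2⟩
    have h2 : x - t₀ < 0 := by linarith [hx.2]
    rw [div_nonpos_iff]
    exact Or.inl ⟨by linarith, by linarith⟩
  -- lower bound on f t₀
  have hg_lb : A₁ * u t₀ ≤ g t₀ := by
    have h1 : ∫ ξ in Icc (-r) (0:ℝ), a₁ ξ * u t₀ ≤ ∫ ξ in Icc (-r) (0:ℝ), a₁ ξ * u (t₀ + ξ) := by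
      apply integral_mono_ae (ha₁int.mul_const (u t₀)) (h_inner_int t₀ ht₀mem)
      filter_upwards [ha₁pos, ae_restrict_mem measurableSet_Icc] with ξ h1 h2
      exact mul_le_mul_of_nonneg_left (hist ξ h2) h1
    calc A₁ * u t₀ = ∫ ξ in Icc (-r) (0:ℝ), a₁ ξ * u t₀ := by
          rw [hA₁def, ← MeasureTheory.integral_mul_const]
      _ ≤ g t₀ := h1
  have hf_lb : (a₀ + A₁) * u t₀ ≤ f t₀ := by
    simp only [hfdef]
    nlinarith
  -- final contradiction
  have he : (0:ℝ) < Real.exp (-K * t₀) := Real.exp_pos _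
  have hfK : f t₀ ≤ K * u t₀ := by nlinarith
  have hle : K ≤ a₀ + A₁ := by nlinarith
  have habs : a₀ ≤ |a₀| := le_abs_self a₀
  rw [hKdef] at hle
  linarith
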